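/- Let $\mathfrak{q}$-polynomials in curvature derivatives be counted with weight $r=\sum_i(j_i+1)$ for a monomial $\prod_i\partial_s^{j_i}\kappa$. If under the flow $\partial_t\partial_s^j\kappa = -2\partial_s^{j+4}\kappa + \mathfrak{q}^{j+5}(\partial_s^{j+2}\kappa)+\mathfrak{q}^{j+3}(\partial_s^{j+2}\kappa)$ for all $j$, then for any $l,m$, $\partial_t\,\mathfrak{q}^l(\partial_s^m\kappa) = \mathfrak{q}^{l+4}(\partial_s^{m+4}\kappa)+\mathfrak{q}^{l+2}(\partial_s^{m+2}\kappa)$. -/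

import Mathlib

def IsQPoly (K : ℕ → ℝ → ℝ → ℝ) (r l : ℕ) (F : ℝ → ℝ → ℝ) : Prop :=
  ∃ (n : ℕ) (c : Fin n → ℝ) (J : Fin n → List ℕ),
    (∀ i, J i ≠ [] ∧ ∀ j ∈ J i, j ≤ l) ∧
    (∀ i, ((J i).map (· + 1)).sum = r) ∧
    ∀ x t : ℝ, F x t = ∑ i, c i * ((J i).map (fun j => K j x t)).prod

theorem isQPoly_zero (K : ℕ → ℝ → ℝ → ℝ) (r l : ℕ) :
    IsQPoly K r l (fun _ _ => 0) :=
  ⟨0, Fin.elim0, Fin.elim0, fun i => i.elim0, fun i => i.elim0, by simp⟩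

theorem isQPoly_mono {K r l l' F} (h : l ≤ l') (hF : IsQPoly K r l F) :
    IsQPoly K r l' F := by
  obtain ⟨n, c, J, h1, h2, h3⟩ := hF
  exact ⟨n, c, J, fun i => ⟨(h1 i).1, fun j hj => le_trans ((h1 i).2 j hj) h⟩, h2, h3⟩

theorem isQPoly_monomial (K : ℕ → ℝ → ℝ → ℝ) (l : ℕ) (c : ℝ) (L : List ℕ)
    (hne : L ≠ []) (hle : ∀ j ∈ L, j ≤ l) :
    IsQPoly K ((L.map (· + 1)).sum) l (fun x t => c * (L.map (fun j => K j x t)).prod) :=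
  ⟨1, fun _ => c, fun _ => L, fun _ => ⟨hne, hle⟩, fun _ => rfl, by simp⟩

theorem isQPoly_smul {K r l F} (c : ℝ) (hF : IsQPoly K r l F) :
    IsQPoly K r l (fun x t => c * F x t) := by
  obtain ⟨n, d, J, h1, h2, h3⟩ := hF
  refine ⟨n, fun i => c * d i, J, h1, h2, fun x t => ?_⟩
  dsimp only
  rw [h3, Finset.mul_sum]
  simp [mul_assoc]

theorem isQPoly_add {K r l F G} (hF : IsQPoly K r l F) (hG : IsQPoly K r l G) :
    IsQPoly K r l (fun x t => F x t + G x t) := by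
  obtain ⟨n, c, J, h1, h2, h3⟩ := hF
  obtain ⟨n', c', J', h1', h2', h3'⟩ := hG
  refine ⟨n + n', Fin.append c c', Fin.append J J', ?_, ?_, ?_⟩
  · intro i
    refine Fin.addCases (fun i => ?_) (fun i => ?_) i <;>
      simp [Fin.append_left, Fin.append_right, h1 _, h1' _]
    exacts [(h1 i).2, (h1' i).2]
  · intro i
    refine Fin.addCases (fun i => ?_) (fun i => ?_) i <;>
      simp [Fin.append_left, Fin.append_right, h2 _, h2' _]
  · intro x t
    dsimp only
    rw [h3, h3', Fin.sum_univ_add]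
    simp [Fin.append_left, Fin.append_right]

theorem isQPoly_sum {K r l : _} {ι : Type} (s : Finset ι) (f : ι → ℝ → ℝ → ℝ)
    (h : ∀ i ∈ s, IsQPoly K r l (f i)) :
    IsQPoly K r l (fun x t => ∑ i ∈ s, f i x t) := by
  classical
  induction s using Finset.induction_on with
  | empty => simpa using isQPoly_zero K r l
  | @insert a s hni ih =>
    have := isQPoly_add (h a (Finset.mem_insert_self a s))
      (ih fun i hi => h i (Finset.mem_insert_of_mem hi))
    simpa [Finset.sum_insert hni] using this

theorem isQPoly_mul_monomial {K r l F} (hF : IsQPoly K r l F) (L : List ℕ)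
    (hle : ∀ j ∈ L, j ≤ l) :
    IsQPoly K (r + (L.map (· + 1)).sum) l
      (fun x t => F x t * (L.map (fun j => K j x t)).prod) := by
  obtain ⟨n, c, J, h1, h2, h3⟩ := hF
  refine ⟨n, c, fun i => J i ++ L, ?_, ?_, ?_⟩
  · intro i
    constructor
    · simp [(h1 i).1]
    · intro j hj
      rcases List.mem_append.mp hj with hj | hj
      exacts [(h1 i).2 j hj, hle j hj]
  · intro i; simp [h2 i]
  · intro x t
    dsimp only
    rw [h3, Finset.sum_mul]
    simp [mul_assoc]

theorem monomial_deriv (K : ℕ → ℝ → ℝ → ℝ)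
    (hflow : ∀ j : ℕ, ∃ P Q : ℝ → ℝ → ℝ,
      IsQPoly K (j + 5) (j + 2) P ∧ IsQPoly K (j + 3) (j + 2) Q ∧
      ∀ x t : ℝ, HasDerivAt (fun τ => K j x τ)
        (-2 * K (j + 4) x t + P x t + Q x t) t) (m : ℕ) :
    ∀ L : List ℕ, (∀ j ∈ L, j ≤ m) →
      ∃ P Q : ℝ → ℝ → ℝ,
        IsQPoly K ((L.map (· + 1)).sum + 4) (m + 4) P ∧
        IsQPoly K ((L.map (· + 1)).sum + 2) (m + 2) Q ∧
        ∀ x t : ℝ, HasDerivAt (fun τ => (L.map (fun j => K j x τ)).prod)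
          (P x t + Q x t) t := by
  intro L
  induction L with
  | nil =>
    intro _
    refine ⟨fun _ _ => 0, fun _ _ => 0, isQPoly_zero K _ _, isQPoly_zero K _ _, ?_⟩
    intro x t
    simpa using hasDerivAt_const t (1 : ℝ)
  | cons j L ih =>
    intro hle
    have hjm : j ≤ m := hle j List.mem_cons_self
    obtain ⟨P', Q', hP', hQ', hd'⟩ := ih fun i hi => hle i (List.mem_cons_of_mem j hi)
    obtain ⟨Pj, Qj, hPj, hQj, hKj⟩ := hflow j
    -- the three pieces of P
    have hT1 : IsQPoly K ((((j :: L)).map (· + 1)).sum + 4) (m + 4)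
        (fun x t => (-2) * ((((j + 4) :: L)).map (fun i => K i x t)).prod) := by
      have := isQPoly_monomial K (m + 4) (-2) ((j + 4) :: L) (by simp)
        (by intro i hi; rcases List.mem_cons.mp hi with h | h
            · omega
            · have := hle i (List.mem_cons_of_mem j h); omega)
      have heq : ((((j + 4) :: L)).map (· + 1)).sum = (((j :: L)).map (· + 1)).sum + 4 := by
        simp; omega
      rwa [heq] at this
    have hT2 : IsQPoly K ((((j :: L)).map (· + 1)).sum + 4) (m + 4)
        (fun x t => Pj x t * (L.map (fun i => K i x t)).prod) := by
      have := isQPoly_mul_monomial (isQPoly_mono (by omega : j + 2 ≤ m + 4) hPj) L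
        (fun i hi => by have := hle i (List.mem_cons_of_mem j hi); omega)
      have heq : j + 5 + (L.map (· + 1)).sum = (((j :: L)).map (· + 1)).sum + 4 := by
        simp; omega
      rwa [heq] at this
    have hT3 : IsQPoly K ((((j :: L)).map (· + 1)).sum + 4) (m + 4)
        (fun x t => P' x t * (([j]).map (fun i => K i x t)).prod) := by
      have := isQPoly_mul_monomial hP' [j]
        (by intro i hi; simp at hi; omega)
      have heq : (L.map (· + 1)).sum + 4 + (([j] : List ℕ).map (· + 1)).sum
          = (((j :: L)).map (· + 1)).sum + 4 := by simp; omega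
      rwa [heq] at this
    have hS1 : IsQPoly K ((((j :: L)).map (· + 1)).sum + 2) (m + 2)
        (fun x t => Qj x t * (L.map (fun i => K i x t)).prod) := by
      have := isQPoly_mul_monomial (isQPoly_mono (by omega : j + 2 ≤ m + 2) hQj) L
        (fun i hi => by have := hle i (List.mem_cons_of_mem j hi); omega)
      have heq : j + 3 + (L.map (· + 1)).sum = (((j :: L)).map (· + 1)).sum + 2 := by
        simp; omega
      rwa [heq] at this
    have hS2 : IsQPoly K ((((j :: L)).map (· + 1)).sum + 2) (m + 2)
        (fun x t => Q' x t * (([j]).map (fun i => K i x t)).prod) := by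
      have := isQPoly_mul_monomial hQ' [j] (by intro i hi; simp at hi; omega)
      have heq : (L.map (· + 1)).sum + 2 + (([j] : List ℕ).map (· + 1)).sum
          = (((j :: L)).map (· + 1)).sum + 2 := by simp; omega
      rwa [heq] at this
    refine ⟨_, _, isQPoly_add (isQPoly_add hT1 hT2) hT3, isQPoly_add hS1 hS2, ?_⟩
    intro x t
    have hd := (hKj x t).fun_mul (hd' x t)
    have : (fun τ => (((j :: L)).map (fun i => K i x τ)).prod)
        = fun τ => K j x τ * (L.map (fun i => K i x τ)).prod := by
      funext τ; simp [List.prod_cons]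
    rw [this]
    refine hd.congr_deriv ?_
    simp only [List.map_cons, List.prod_cons, List.map_nil, List.prod_nil]
    ring

theorem qpoly_time_derivative (K : ℕ → ℝ → ℝ → ℝ)
    (hflow : ∀ j : ℕ, ∃ P Q : ℝ → ℝ → ℝ,
      IsQPoly K (j + 5) (j + 2) P ∧ IsQPoly K (j + 3) (j + 2) Q ∧
      ∀ x t : ℝ, HasDerivAt (fun τ => K j x τ)
        (-2 * K (j + 4) x t + P x t + Q x t) t) :
    ∀ (l m : ℕ) (F : ℝ → ℝ → ℝ), IsQPoly K l m F →
      ∃ P Q : ℝ → ℝ → ℝ,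
        IsQPoly K (l + 4) (m + 4) P ∧ IsQPoly K (l + 2) (m + 2) Q ∧
        ∀ x t : ℝ, HasDerivAt (fun τ => F x τ) (P x t + Q x t) t := by
  intro l m F hF
  obtain ⟨n, c, J, h1, h2, h3⟩ := hF
  have hmd : ∀ i : Fin n, ∃ P Q : ℝ → ℝ → ℝ,
      IsQPoly K (l + 4) (m + 4) P ∧ IsQPoly K (l + 2) (m + 2) Q ∧
      ∀ x t : ℝ, HasDerivAt (fun τ => ((J i).map (fun j => K j x τ)).prod)
        (P x t + Q x t) t := by
    intro i
    obtain ⟨P, Q, hP, hQ, hd⟩ := monomial_deriv K hflow m (J i) (h1 i).2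
    rw [h2 i] at hP hQ
    exact ⟨P, Q, hP, hQ, hd⟩
  choose P Q hP hQ hd using hmd
  refine ⟨fun x t => ∑ i, c i * P i x t, fun x t => ∑ i, c i * Q i x t,
    isQPoly_sum Finset.univ _ (fun i _ => isQPoly_smul (c i) (hP i)),
    isQPoly_sum Finset.univ _ (fun i _ => isQPoly_smul (c i) (hQ i)), ?_⟩
  intro x t
  have hFe : (fun τ => F x τ)
      = fun τ => ∑ i, c i * ((J i).map (fun j => K j x τ)).prod := by
    funext τ; exact h3 x τ
  rw [hFe]
  have : HasDerivAt (fun τ => ∑ i, c i * ((J i).map (fun j => K j x τ)).prod)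
      (∑ i, c i * (P i x t + Q i x t)) t :=
    HasDerivAt.fun_sum fun i _ => (hd i x t).const_mul (c i)
  convert this using 1
  rw [← Finset.sum_add_distrib]
  congr 1; funext i; ring
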